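/- For every z in the unit disk D = {z ∈ ℂ : |z| < 1}, the value z + √(1 + z²) has positive real part, where √ denotes the principal branch of the complex square root. In other words, the function z ↦ z + √(1+z²) maps the unit disk into the right half-plane. -/

import Mathlib

open Complex Metric

/-- For every `z` in the unit disk, `z + √(1 + z²)` (principal branch of the
square root) has positive real part. -/
theorem re_pos_of_q_function :
    ∀ z ∈ ball (0 : ℂ) 1, 0 < (z + (1 + z ^ 2) ^ ((1 : ℂ) / 2)).re := by
  intro z hz
  rw [mem_ball_zero_iff] at hz
  set a : ℂ := 1 + z ^ 2 with ha_def
  have habs : ‖z ^ 2‖ < 1 := by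
    rw [norm_pow]
    nlinarith [norm_nonneg z]
  have ha_re : 0 < a.re := by
    have h1 : |(z ^ 2).re| ≤ ‖z ^ 2‖ := Complex.abs_re_le_norm _
    have h2 := abs_lt.mp (lt_of_le_of_lt h1 habs)
    simp only [ha_def, Complex.add_re, Complex.one_re]
    linarith [h2.1]
  have ha : a ≠ 0 := fun h => by simp [h] at ha_re
  set w : ℂ := a ^ ((1 : ℂ) / 2) with hw_def
  have hw : w ^ 2 = a := by
    have h12 : ((1 : ℂ) / 2) = ((2 : ℕ) : ℂ)⁻¹ := by norm_num
    rw [hw_def, h12]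
    exact Complex.cpow_nat_inv_pow a two_ne_zero
  have harg : |Complex.arg a| < Real.pi / 2 :=
    Complex.abs_arg_lt_pi_div_two_iff.mpr (Or.inl ha_re)
  have hwre : 0 < w.re := by
    rw [hw_def, Complex.cpow_def_of_ne_zero ha, Complex.exp_re]
    have him : (Complex.log a * (1 / 2)).im = Complex.arg a / 2 := by
      simp [Complex.mul_im, Complex.log_im]
      ring
    rw [him]
    have habs' := abs_lt.mp harg
    have hcos : 0 < Real.cos (Complex.arg a / 2) := by
      apply Real.cos_pos_of_mem_Ioo
      constructor <;> [linarith [habs'.1]; linarith [habs'.2]]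
    positivity
  have huv : (z + w) * (w - z) = 1 := by linear_combination hw
  have hu : z + w ≠ 0 := by
    intro h
    rw [h, zero_mul] at huv
    exact one_ne_zero huv.symm
  have hinv : (z + w)⁻¹ = w - z := inv_eq_of_mul_eq_one_right huv
  have hn : 0 < Complex.normSq (z + w) := Complex.normSq_pos.mpr hu
  have hvre : (w - z).re = (z + w).re / Complex.normSq (z + w) := by
    rw [← hinv, Complex.inv_re]
  have hsum : (z + w).re + (w - z).re = 2 * w.re := by
    simp [Complex.add_re, Complex.sub_re]; ring
  rw [hvre] at hsum
  have key : (z + w).re * Complex.normSq (z + w) + (z + w).re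
      = 2 * w.re * Complex.normSq (z + w) := by
    field_simp at hsum
    simp only [Complex.add_re] at hsum ⊢
    linear_combination hsum
  nlinarith [mul_pos hwre hn]
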